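/- Let (S, B_S) be a quadratic Lie algebra, D ∈ 𝔬(B_S) a derivation of S, V a 2m-dimensional space with nondegenerate skew-symmetric form ω, and σ: FD ⊕ S ⊕ Fℏ → 𝔬(ω) a linear map with σ(D) invertible and σ = 0 on S ⊕ Fℏ. On g = S ⊕ FD ⊕ V ⊕ Fℏ define [a,b] = [a,b]_S + B_S(D(a),b)ℏ for a,b ∈ S, [D,u] = σ(D)(u) for u ∈ V, [u,v] = ω(u,v)ℏ for u,v ∈ V, [D,a] = D(a) for a ∈ S, and ℏ central, all other brackets between S and V zero. Define B(x+u, y+v) = B_{S(D)}(x,y) + ω(σ(D)^{-1}(u), v) for x,y ∈ S(D), u,v ∈ V, where B_{S(D)} is the double extension metric. Then g is a quadratic Lie algebra and V ⊕ Fℏ is an ideal of g isomorphic to the Heisenberg Lie algebra 𝔥_m. -/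

import Mathlib

/-- The bracket on `𝔤 = S ⊕ FD ⊕ V ⊕ Fℏ`, modelled as `(F × S × F) × V`
(first factor: `FD ⊕ S ⊕ Fℏ = S(D)`, second factor: `V`):
`[a,b] = [a,b]_S + B_S(D a, b)ℏ`, `[D,a] = D(a)` for `a ∈ S`, `[D,u] = σ(D)(u)`,
`[u,v] = ω(u,v)ℏ` for `u,v ∈ V`, `ℏ` central, `[S,V] = 0`. -/
def bigBracket {F S V : Type*} [Field F] [LieRing S] [LieAlgebra F S]
    [AddCommGroup V] [Module F V]
    (D : S →ₗ[F] S) (BS : LinearMap.BilinForm F S)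
    (σ : (F × S × F) →ₗ[F] V →ₗ[F] V) (ω : V →ₗ[F] V →ₗ[F] F) :
    (F × S × F) × V → (F × S × F) × V → (F × S × F) × V :=
  fun x y =>
    ((0, x.1.1 • D y.1.2.1 - y.1.1 • D x.1.2.1 + ⁅x.1.2.1, y.1.2.1⁆,
        BS (D x.1.2.1) y.1.2.1 + ω x.2 y.2),
      σ x.1 y.2 - σ y.1 x.2)

/-- The bilinear form on `𝔤 = S(D) ⊕ V`: the double-extension metric on `S(D)`
plus `B_V(u,v) = ω(σ(D)⁻¹(u),v)` on `V` (with `e = σ(D)`). -/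
def bigForm {F S V : Type*} [Field F] [LieRing S] [LieAlgebra F S]
    [AddCommGroup V] [Module F V]
    (BS : LinearMap.BilinForm F S) (e : V ≃ₗ[F] V) (ω : V →ₗ[F] V →ₗ[F] F) :
    (F × S × F) × V → (F × S × F) × V → F :=
  fun x y => BS x.1.2.1 y.1.2.1 + x.1.1 * y.1.2.2 + x.1.2.2 * y.1.1 +
    ω (e.symm x.2) y.2

/-- Theorem 1.4 (construction direction): given a quadratic Lie algebra `(S,B_S)`,
a derivation `D ∈ 𝔬(B_S)`, a symplectic space `(V,ω)` and a linear map
`σ : S(D) → 𝔬(ω)` with `σ(D)` invertible and `σ = 0` on `S ⊕ Fℏ`, the space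
`𝔤 = S ⊕ FD ⊕ V ⊕ Fℏ` with the above bracket and form is a quadratic Lie algebra
in which `V ⊕ Fℏ` is an ideal with the Heisenberg Lie algebra structure. -/
theorem quadratic_with_heisenberg_ideal_construction
    {F S V : Type*} [Field F] [LieRing S] [LieAlgebra F S]
    [AddCommGroup V] [Module F V]
    (BS : LinearMap.BilinForm F S)
    (hsymm : ∀ x y : S, BS x y = BS y x)
    (hnondeg : BS.Nondegenerate)
    (hinvS : ∀ x y z : S, BS ⁅x, y⁆ z = BS x ⁅y, z⁆)
    (D : S →ₗ[F] S)
    (hder : ∀ x y : S, D ⁅x, y⁆ = ⁅D x, y⁆ + ⁅x, D y⁆)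
    (hDskew : ∀ x y : S, BS (D x) y = - BS x (D y))
    (ω : V →ₗ[F] V →ₗ[F] F)
    (hωskew : ∀ u v : V, ω u v = - ω v u)
    (hω_nondeg : ∀ u : V, (∀ v : V, ω u v = 0) → u = 0)
    (σ : (F × S × F) →ₗ[F] V →ₗ[F] V)
    (hσskew : ∀ p : F × S × F, ∀ u v : V, ω (σ p u) v = - ω u (σ p v))
    (hσzero : ∀ p : F × S × F, p.1 = 0 → σ p = 0)
    (e : V ≃ₗ[F] V)
    (hσD : ∀ v : V, σ (1, 0, 0) v = e v) :
    (∀ x y : (F × S × F) × V, bigBracket D BS σ ω x y = - bigBracket D BS σ ω y x) ∧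
    (∀ x y z : (F × S × F) × V,
        bigBracket D BS σ ω (bigBracket D BS σ ω x y) z +
        bigBracket D BS σ ω (bigBracket D BS σ ω y z) x +
        bigBracket D BS σ ω (bigBracket D BS σ ω z x) y = 0) ∧
    (∀ x y : (F × S × F) × V, bigForm BS e ω x y = bigForm BS e ω y x) ∧
    (∀ x : (F × S × F) × V, (∀ y : (F × S × F) × V, bigForm BS e ω x y = 0) → x = 0) ∧
    (∀ x y z : (F × S × F) × V,
        bigForm BS e ω (bigBracket D BS σ ω x y) z =
          bigForm BS e ω x (bigBracket D BS σ ω y z)) ∧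
    (∀ x y : (F × S × F) × V, y.1.1 = 0 → y.1.2.1 = 0 →
        (bigBracket D BS σ ω x y).1.1 = 0 ∧ (bigBracket D BS σ ω x y).1.2.1 = 0) ∧
    (∀ γ δ : F, ∀ u v : V,
        bigBracket D BS σ ω (((0 : F), (0 : S), γ), u) (((0 : F), (0 : S), δ), v) =
          (((0 : F), (0 : S), ω u v), 0)) := by
  have hσ : ∀ (p : F × S × F) (v : V), σ p v = p.1 • e v := by
    intro p v
    have hp : p = p.1 • ((1:F), (0:S), (0:F)) + (0, p.2) := by
      refine Prod.ext ?_ (Prod.ext ?_ ?_) <;> simp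
    conv_lhs => rw [hp]
    rw [map_add, map_smul, hσzero (0, p.2) rfl]
    simp only [add_zero, LinearMap.smul_apply, hσD]
  have heskew : ∀ u v : V, ω (e u) v = - ω u (e v) := by
    intro u v; simpa only [hσD] using hσskew (1, 0, 0) u v
  have hee : ∀ u v : V, ω (e u) v = ω (e v) u := by
    intro u v; rw [heskew, hωskew]; ring
  have h3 : ∀ u v : V, ω (e.symm u) (e v) = - ω u v := by
    intro u v
    have := heskew (e.symm u) v
    rw [e.apply_symm_apply] at this
    linear_combination this
  have hGsym : ∀ u v : V, ω (e.symm u) v = ω (e.symm v) u := by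
    intro u v
    conv_lhs => rw [← e.apply_symm_apply v]
    rw [h3, hωskew, neg_neg]
  have h2 : ∀ x y z : S, BS x ⁅y, z⁆ = BS y ⁅z, x⁆ := by
    intro x y z
    rw [← hinvS x y z, hsymm, ← hinvS z x y, hsymm]
  have hQ : ∀ a b c : S, BS (D a) ⁅b,c⁆ + BS (D b) ⁅c,a⁆ + BS (D c) ⁅a,b⁆ = 0 := by
    intro a b c
    have h4 := hDskew a ⁅b,c⁆
    rw [hder, map_add] at h4
    linear_combination h4 - h2 a (D b) c - h2 a b (D c) - h2 b (D c) a
  have hT : ∀ a b c : S, BS (D ⁅a,b⁆) c = BS (D a) ⁅b,c⁆ + BS (D b) ⁅c,a⁆ := by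
    intro a b c
    have h4 : BS (D ⁅a,b⁆) c = BS ⁅D a, b⁆ c + BS ⁅a, D b⁆ c := by
      rw [hder, map_add, LinearMap.add_apply]
    rw [h4, hinvS, hinvS, h2 a (D b) c]
  have hDD : ∀ x y : S, BS (D (D x)) y = BS (D (D y)) x := by
    intro x y
    linear_combination hDskew (D x) y - hDskew x (D y) + hsymm x (D (D y))
  have hjac : ∀ a b c : S, ⁅⁅a,b⁆,c⁆ + ⁅⁅b,c⁆,a⁆ + ⁅⁅c,a⁆,b⁆ = 0 := by
    intro a b c
    rw [← lie_skew ⁅b,c⁆ a, ← lie_skew ⁅c,a⁆ b, lie_lie, ← lie_skew a c, lie_neg]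
    abel
  refine ⟨?_, ?_, ?_, ?_, ?_, ?_, ?_⟩
  · -- skew-symmetry
    rintro ⟨⟨α, a, t⟩, u⟩ ⟨⟨β, b, s⟩, v⟩
    simp only [bigBracket, Prod.neg_mk, Prod.mk.injEq]
    refine ⟨⟨?_, ?_, ?_⟩, ?_⟩
    · simp
    · rw [← lie_skew b a]
      module
    · linear_combination hDskew a b - hsymm a (D b) + hωskew u v
    · abel
  · -- Jacobi
    rintro ⟨⟨α, a, t⟩, u⟩ ⟨⟨β, b, s⟩, v⟩ ⟨⟨γ, c, r⟩, w⟩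
    rw [show ((0 : (F × S × F) × V)) = (((0:F), (0:S), (0:F)), (0:V)) from rfl]
    simp only [bigBracket, Prod.mk_add_mk, Prod.mk.injEq,
      map_add, map_sub, map_smul, zero_smul, smul_lie, lie_smul, add_lie, sub_lie,
      lie_add, lie_sub, LinearMap.add_apply, LinearMap.sub_apply, LinearMap.smul_apply,
      smul_eq_mul, zero_sub, zero_add, sub_zero, hσ]
    refine ⟨⟨?_, ?_, ?_⟩, ?_⟩
    · simp
    · linear_combination (norm := module) (-γ : F) • hder a b + (-α : F) • hder b c +
        (-β : F) • hder c a + (-γ : F) • (lie_skew a (D b)).symm +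
        (-α : F) • (lie_skew b (D c)).symm + (-β : F) • (lie_skew c (D a)).symm + hjac a b c
    · linear_combination (α : F) * hDD b c - (β : F) * hDD a c + (γ : F) * hDD a b +
        hT a b c + hT b c a + hT c a b + hQ a b c + hQ a b c +
        (α : F) * hee v w + (β : F) * hee w u + (γ : F) * hee u v
    · linear_combination (norm := module) (0 : F) • hσD u
  · -- symmetry of the form
    rintro ⟨⟨α, a, t⟩, u⟩ ⟨⟨β, b, s⟩, v⟩
    simp only [bigForm]
    rw [hsymm, hGsym]
    ring
  · -- nondegeneracy
    rintro ⟨⟨α, a, t⟩, u⟩ h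
    have ha : a = 0 := by
      apply hnondeg.1
      intro b
      have := h ((0, b, 0), 0)
      simpa [bigForm] using this
    have hα : α = 0 := by
      have := h ((0, 0, 1), 0)
      simpa [bigForm, ha] using this
    have ht : t = 0 := by
      have := h ((1, 0, 0), 0)
      simpa [bigForm, ha] using this
    have hu : u = 0 := by
      have h5 : e.symm u = 0 := by
        apply hω_nondeg
        intro v
        have := h ((0, 0, 0), v)
        simpa [bigForm] using this
      have := congrArg e h5
      rwa [e.apply_symm_apply, map_zero] at this
    simp [ha, hα, ht, hu]
  · -- invariance
    rintro ⟨⟨α, a, t⟩, u⟩ ⟨⟨β, b, s⟩, v⟩ ⟨⟨γ, c, r⟩, w⟩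
    simp only [bigBracket, bigForm, map_add, map_sub, map_smul, LinearMap.add_apply,
      LinearMap.sub_apply, LinearMap.smul_apply, smul_eq_mul, hσ,
      LinearEquiv.symm_apply_apply, h3]
    linear_combination hinvS a b c + (γ : F) * hDskew a b - (β : F) * hDskew a c
  · -- V + Fh is an ideal
    rintro ⟨⟨α, a, t⟩, u⟩ ⟨⟨β, b, s⟩, v⟩ h1 h2'
    simp only at h1 h2'
    subst h1 h2'
    constructor
    · rfl
    · simp [bigBracket]
  · -- Heisenberg structure
    intro γ δ u v
    simp only [bigBracket, Prod.mk.injEq]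
    refine ⟨⟨?_, ?_, ?_⟩, ?_⟩ <;> simp [hσ]
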